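/- arXiv:0804.0123 — 2 statements merged into one kernel-verified Lean document; each statement's English description precedes it below -/
import Mathlib

section
/- Let μ⁺ be a Borel measure on [0,∞) that is finite on compact sets, let ε ≥ 0, and let g : [0,∞) → ℝ be Borel measurable and bounded on bounded intervals, satisfying 0 ≤ g(t) ≤ ε + ∫_{[0,t)} g(s) dμ⁺(s) for all t ≥ 0. Then g(t) ≤ ε · exp(μ⁺([0,t))) for all t ≥ 0. -/
open MeasureTheory Set

namespace GronwallAux

variable (μ : Measure ℝ) [IsFiniteMeasureOnCompacts μ]

noncomputable def F (u : ℝ) : ℝ := (μ (Ico (0:ℝ) u)).toReal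

lemma F_fin (u : ℝ) : μ (Ico (0:ℝ) u) ≠ ⊤ :=
  ((measure_mono (Ico_subset_Icc_self)).trans_lt (isCompact_Icc.measure_lt_top)).ne

lemma F_mono : Monotone (F μ) := by
  intro u v huv
  exact ENNReal.toReal_mono (F_fin μ v) (measure_mono (Ico_subset_Ico_right huv))

lemma F_meas : Measurable (F μ) := (F_mono μ).measurable

lemma F_nonneg (u : ℝ) : 0 ≤ F μ u := ENNReal.toReal_nonneg

/-- tail bound: the measure of points of `[0,t)` where `F > s` is at most `F t - s`. -/
lemma tail (t s : ℝ) (hs : 0 < s) :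
    (μ.restrict (Ico (0:ℝ) t)) {u | s < F μ u} ≤ ENNReal.ofReal (F μ t - s) := by
  rw [Measure.restrict_apply' measurableSet_Ico]
  set A : Set ℝ := {u | s < F μ u} ∩ Ico (0:ℝ) t with hA
  rcases A.eq_empty_or_nonempty with h | h
  · simp [h]
  -- A nonempty
  have hAsub : A ⊆ Ico (0:ℝ) t := inter_subset_right
  have hbdd : BddBelow A := ⟨0, fun x hx => (hAsub hx).1⟩
  set c := sInf A with hc
  have hc0 : 0 ≤ c := le_csInf h (fun x hx => (hAsub hx).1)
  have hct : c < t := by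
    obtain ⟨a, ha⟩ := h
    exact lt_of_le_of_lt (csInf_le hbdd ha) (hAsub ha).2
  -- key: μ (Icc 0 c) ≥ ofReal s  OR in case c ∈ A, μ (Ico 0 c) ≥ ofReal s
  have key : ∀ u, s < F μ u → ENNReal.ofReal s < μ (Ico (0:ℝ) u) := by
    intro u hu
    rw [ENNReal.ofReal_lt_iff_lt_toReal hs.le (F_fin μ u)]
    exact hu
  by_cases hcA : c ∈ A
  · -- A ⊆ Ico c t
    have h1 : A ⊆ Ico c t := fun x hx => ⟨csInf_le hbdd hx, (hAsub hx).2⟩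
    have h2 : ENNReal.ofReal s ≤ μ (Ico (0:ℝ) c) := (key c hcA.1).le
    have hsplit : μ (Ico (0:ℝ) c) + μ (Ico c t) = μ (Ico (0:ℝ) t) := by
      rw [← measure_union Ico_disjoint_Ico_same measurableSet_Ico,
        Ico_union_Ico_eq_Ico hc0 hct.le]
    have : μ A + ENNReal.ofReal s ≤ μ (Ico (0:ℝ) t) := by
      calc μ A + ENNReal.ofReal s ≤ μ (Ico c t) + μ (Ico (0:ℝ) c) :=
            add_le_add (measure_mono h1) h2
        _ = μ (Ico (0:ℝ) t) := by rw [add_comm]; exact hsplit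
    rw [ENNReal.ofReal_sub _ hs.le, F, ENNReal.ofReal_toReal (F_fin μ t)]
    exact ENNReal.le_sub_of_add_le_right ENNReal.ofReal_ne_top this
  · -- c ∉ A : A ⊆ Ioo c t, and μ (Icc 0 c) ≥ ofReal s by approximation
    have h1 : A ⊆ Ioo c t := by
      intro x hx
      refine ⟨lt_of_le_of_ne (csInf_le hbdd hx) ?_, (hAsub hx).2⟩
      intro hxc; exact hcA (hxc ▸ hx)
    have h2 : ENNReal.ofReal s ≤ μ (Icc (0:ℝ) c) := by
      -- Icc 0 c = ⋂ n, Ico 0 (c + 1/(n+1))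
      have hseq : Antitone (fun n : ℕ => Ico (0:ℝ) (c + 1/(n+1))) := by
        intro a b hab
        apply Ico_subset_Ico_right
        have hcast : ((a:ℝ)+1) ≤ (b:ℝ)+1 := by exact_mod_cast Nat.succ_le_succ hab
        have h1 : (0:ℝ) < (a:ℝ)+1 := by positivity
        have := one_div_le_one_div_of_le h1 hcast
        linarith
      have hint : Icc (0:ℝ) c = ⋂ n : ℕ, Ico (0:ℝ) (c + 1/(n+1)) := by
        ext x
        simp only [mem_Icc, mem_iInter, mem_Ico]
        constructor
        · rintro ⟨hx0, hxc⟩ n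
          have : (0:ℝ) < 1/((n:ℝ)+1) := by positivity
          exact ⟨hx0, by linarith⟩
        · intro hx
          refine ⟨(hx 0).1, ?_⟩
          by_contra hcx
          push_neg at hcx
          obtain ⟨n, hn⟩ := exists_nat_one_div_lt (sub_pos.mpr hcx)
          have := (hx n).2
          linarith
      have htend := MeasureTheory.tendsto_measure_iInter_atTop (μ := μ)
        (s := fun n : ℕ => Ico (0:ℝ) (c + 1/((n:ℝ)+1)))
        (fun n => measurableSet_Ico.nullMeasurableSet)
        hseq ⟨0, F_fin μ _⟩
      rw [← hint] at htend
      refine ge_of_tendsto htend (Filter.Eventually.of_forall ?_)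
      intro n
      -- find u ∈ A with u < c + 1/(n+1)
      obtain ⟨u, huA, hu⟩ := csInf_lt_iff hbdd h |>.mp
        (show c < c + 1/((n:ℝ)+1) by
          have : (0:ℝ) < 1/((n:ℝ)+1) := by positivity
          linarith)
      exact (key u huA.1).le.trans (measure_mono (Ico_subset_Ico_right hu.le))
    have hsplit : μ (Icc (0:ℝ) c) + μ (Ioo c t) = μ (Ico (0:ℝ) t) := by
      rw [← measure_union (Set.disjoint_left.mpr fun x hx h2 => absurd hx.2 (not_le.mpr h2.1))
        measurableSet_Ioo, Icc_union_Ioo_eq_Ico hc0 hct]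
    have : μ A + ENNReal.ofReal s ≤ μ (Ico (0:ℝ) t) := by
      calc μ A + ENNReal.ofReal s ≤ μ (Ioo c t) + μ (Icc (0:ℝ) c) :=
            add_le_add (measure_mono h1) h2
        _ = μ (Ico (0:ℝ) t) := by rw [add_comm]; exact hsplit
    rw [ENNReal.ofReal_sub _ hs.le, F, ENNReal.ofReal_toReal (F_fin μ t)]
    exact ENNReal.le_sub_of_add_le_right ENNReal.ofReal_ne_top this

end GronwallAux

namespace GronwallAux

variable (μ : Measure ℝ) [IsFiniteMeasureOnCompacts μ]

lemma key_lintegral (t : ℝ) (j : ℕ) :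
    ∫⁻ u, ENNReal.ofReal ((F μ u)^(j+1)) ∂(μ.restrict (Ico (0:ℝ) t)) ≤
      ENNReal.ofReal ((F μ t)^(j+2) / (j+2)) := by
  set ν := μ.restrict (Ico (0:ℝ) t) with hν
  set m := F μ t with hm
  have hm0 : 0 ≤ m := F_nonneg μ t
  have hg : ∀ x : ℝ, 0 ≤ x → ∫ s in (0:ℝ)..x, ((j:ℝ)+1) * s^j = x^(j+1) := by
    intro x hx
    rw [intervalIntegral.integral_const_mul, integral_pow]
    field_simp
    simp
  have hlc := lintegral_comp_eq_lintegral_meas_lt_mul ν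
    (f := F μ) (g := fun s => ((j:ℝ)+1) * s^j)
    (Filter.Eventually.of_forall (F_nonneg μ))
    (F_meas μ).aemeasurable
    (fun r _ => (Continuous.intervalIntegrable (by continuity) 0 r))
    (((ae_restrict_iff' measurableSet_Ioi).mpr (Filter.Eventually.of_forall
      (fun s hs => by
        have h : (0:ℝ) < s := hs
        positivity))))
  have hL : ∫⁻ u, ENNReal.ofReal ((F μ u)^(j+1)) ∂ν
      = ∫⁻ s in Ioi (0:ℝ), ν {a | s < F μ a} * ENNReal.ofReal (((j:ℝ)+1) * s^j) := by
    rw [← hlc]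
    apply lintegral_congr
    intro u
    rw [hg (F μ u) (F_nonneg μ u)]
  rw [hL]
  have hbound : ∫⁻ s in Ioi (0:ℝ), ν {a | s < F μ a} * ENNReal.ofReal (((j:ℝ)+1) * s^j)
      ≤ ∫⁻ s in Ioi (0:ℝ),
        (Ioc (0:ℝ) m).indicator (fun s => ENNReal.ofReal ((m - s) * (((j:ℝ)+1) * s^j))) s := by
    apply lintegral_mono_ae
    rw [ae_restrict_iff' measurableSet_Ioi]
    refine Filter.Eventually.of_forall (fun s hs => ?_)
    rw [mem_Ioi] at hs
    by_cases hsm : s ≤ m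
    · rw [indicator_of_mem (mem_Ioc.mpr ⟨hs, hsm⟩)]
      calc ν {a | s < F μ a} * ENNReal.ofReal (((j:ℝ)+1) * s^j)
          ≤ ENNReal.ofReal (m - s) * ENNReal.ofReal (((j:ℝ)+1) * s^j) :=
            mul_le_mul_left (tail μ t s hs) _
        _ = ENNReal.ofReal ((m - s) * (((j:ℝ)+1) * s^j)) :=
            (ENNReal.ofReal_mul (by linarith)).symm
    · push_neg at hsm
      have hempty : {a | s < F μ a} ∩ Ico (0:ℝ) t = ∅ := by
        ext a
        simp only [mem_inter_iff, mem_setOf_eq, mem_Ico, mem_empty_iff_false, iff_false]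
        rintro ⟨h1, h2, h3⟩
        exact absurd ((F_mono μ h3.le).trans_lt hsm) (not_lt.mpr h1.le)
      rw [hν, Measure.restrict_apply' measurableSet_Ico, hempty, measure_empty, zero_mul]
      exact zero_le
  refine hbound.trans ?_
  rw [lintegral_indicator measurableSet_Ioc, Measure.restrict_restrict measurableSet_Ioc,
    inter_eq_left.mpr Ioc_subset_Ioi_self]
  rw [← ofReal_integral_eq_lintegral_ofReal]
  · apply ENNReal.ofReal_le_ofReal
    rw [← intervalIntegral.integral_of_le hm0]
    have hcongr : ∀ s : ℝ, (m - s) * (((j:ℝ)+1) * s^j)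
        = (((j:ℝ)+1) * m) * s^j - ((j:ℝ)+1) * s^(j+1) := by intro s; ring
    rw [intervalIntegral.integral_congr (fun s _ => hcongr s)]
    rw [intervalIntegral.integral_sub
      ((intervalIntegral.intervalIntegrable_pow j).const_mul _)
      ((intervalIntegral.intervalIntegrable_pow (j+1)).const_mul _),
      intervalIntegral.integral_const_mul, intervalIntegral.integral_const_mul,
      integral_pow, integral_pow]
    have h1 : ((j:ℝ)+1) ≠ 0 := by positivity
    have h2 : ((j:ℝ)+2) ≠ 0 := by positivity
    simp only [zero_pow (Nat.succ_ne_zero _), sub_zero]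
    push_cast
    apply le_of_eq
    field_simp
    ring
  · exact (Continuous.integrableOn_Ioc (by continuity))
  · filter_upwards [ae_restrict_mem measurableSet_Ioc] with s hs
    rw [mem_Ioc] at hs
    have h1 := hs.1
    have h2 := hs.2
    show (0:ℝ) ≤ (m - s) * (((j:ℝ)+1) * s^j)
    have h3 : (0:ℝ) ≤ m - s := by linarith
    positivity

end GronwallAux

namespace GronwallAux

variable (μ : Measure ℝ) [IsFiniteMeasureOnCompacts μ]

instance instFinRestrict (t : ℝ) : IsFiniteMeasure (μ.restrict (Ico (0:ℝ) t)) :=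
  ⟨by rw [Measure.restrict_apply_univ]; exact (F_fin μ t).lt_top⟩

lemma intF (t : ℝ) (k : ℕ) : IntegrableOn (fun u => (F μ u)^k) (Ico (0:ℝ) t) μ := by
  refine Integrable.mono' (integrable_const ((F μ t)^k))
    ((F_meas μ).pow_const k).aestronglyMeasurable ?_
  filter_upwards [ae_restrict_mem measurableSet_Ico] with u hu
  rw [Real.norm_eq_abs, abs_of_nonneg (pow_nonneg (F_nonneg μ u) k)]
  exact pow_le_pow_left₀ (F_nonneg μ u) (F_mono μ hu.2.le) k

lemma key (t : ℝ) (k : ℕ) :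
    ∫ u in Ico (0:ℝ) t, (F μ u)^k ∂μ ≤ (F μ t)^(k+1) / ((k:ℝ)+1) := by
  rcases k with _ | j
  · simp only [pow_zero, pow_one]
    rw [setIntegral_const, smul_eq_mul, mul_one]
    simp [F]
    exact le_rfl
  · rw [MeasureTheory.integral_eq_lintegral_of_nonneg_ae
      (Filter.Eventually.of_forall (fun u => pow_nonneg (F_nonneg μ u) _))
      ((F_meas μ).pow_const _).aestronglyMeasurable]
    have h := key_lintegral μ t j
    have hF0 := F_nonneg μ t
    have hnn : (0:ℝ) ≤ (F μ t)^(j+2) / ((j:ℝ)+2) := by positivity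
    have := ENNReal.toReal_le_of_le_ofReal hnn h
    refine this.trans (le_of_eq ?_)
    push_cast
    ring

lemma iterate (T : ℝ) (ε C : ℝ) (hε : 0 ≤ ε) (hC : 0 ≤ C)
    (g : ℝ → ℝ) (hmeas : Measurable g)
    (hCbd : ∀ u ∈ Icc (0:ℝ) T, |g u| ≤ C)
    (hineq : ∀ t, 0 ≤ t → g t ≤ ε + ∫ s in Ico (0:ℝ) t, g s ∂μ) :
    ∀ n : ℕ, ∀ t ∈ Icc (0:ℝ) T,
      g t ≤ ε * (∑ k ∈ Finset.range n, (F μ t)^k / (Nat.factorial k))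
        + C * (F μ t)^n / (Nat.factorial n) := by
  intro n
  induction n with
  | zero =>
    intro t ht
    simpa using (le_abs_self (g t)).trans (hCbd t ht)
  | succ n ih =>
    intro t ht
    set φ : ℝ → ℝ := fun u => ∑ k ∈ Finset.range n, ε / (Nat.factorial k) * (F μ u)^k
      + C / (Nat.factorial n) * (F μ u)^n with hφ
    have hgint : IntegrableOn g (Ico (0:ℝ) t) μ := by
      refine Integrable.mono' (integrable_const C) hmeas.aestronglyMeasurable ?_
      filter_upwards [ae_restrict_mem measurableSet_Ico] with u hu
      rw [Real.norm_eq_abs]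
      exact hCbd u ⟨hu.1, hu.2.le.trans ht.2⟩
    have hφint : IntegrableOn φ (Ico (0:ℝ) t) μ := by
      refine Integrable.add ?_ ((intF μ t n).const_mul _)
      exact integrable_finset_sum _ (fun k _ => (intF μ t k).const_mul _)
    have hptwise : ∀ u ∈ Ico (0:ℝ) t, g u ≤ φ u := by
      intro u hu
      have := ih u ⟨hu.1, hu.2.le.trans ht.2⟩
      refine this.trans (le_of_eq ?_)
      rw [hφ, Finset.mul_sum]
      refine congrArg₂ (· + ·) (Finset.sum_congr rfl fun k _ => by ring) (by ring)
    have h1 : g t ≤ ε + ∫ u in Ico (0:ℝ) t, φ u ∂μ := by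
      refine (hineq t ht.1).trans (add_le_add_right ?_ ε)
      exact setIntegral_mono_on hgint hφint measurableSet_Ico hptwise
    have h2 : ∫ u in Ico (0:ℝ) t, φ u ∂μ
        = ∑ k ∈ Finset.range n, ε / (Nat.factorial k) * ∫ u in Ico (0:ℝ) t, (F μ u)^k ∂μ
          + C / (Nat.factorial n) * ∫ u in Ico (0:ℝ) t, (F μ u)^n ∂μ := by
      rw [hφ, integral_add (integrable_finset_sum _ (fun k _ => (intF μ t k).const_mul _))
        ((intF μ t n).const_mul _),
        integral_finset_sum _ (fun k _ => (intF μ t k).const_mul _)]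
      simp_rw [MeasureTheory.integral_const_mul]
    have h3 : ∫ u in Ico (0:ℝ) t, φ u ∂μ
        ≤ ∑ k ∈ Finset.range n, ε * ((F μ t)^(k+1) / (Nat.factorial (k+1)))
          + C * (F μ t)^(n+1) / (Nat.factorial (n+1)) := by
      rw [h2]
      refine add_le_add (Finset.sum_le_sum fun k _ => ?_) ?_
      · have hk := key μ t k
        have h4 : ε / (Nat.factorial k) * ∫ u in Ico (0:ℝ) t, (F μ u)^k ∂μ
            ≤ ε / (Nat.factorial k) * ((F μ t)^(k+1) / ((k:ℝ)+1)) :=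
          mul_le_mul_of_nonneg_left hk (by positivity)
        refine h4.trans (le_of_eq ?_)
        rw [Nat.factorial_succ]
        have hfk : (Nat.factorial k : ℝ) ≠ 0 := by positivity
        have hk1 : ((k:ℝ)+1) ≠ 0 := by positivity
        push_cast
        rw [div_mul_div_comm, mul_div_assoc']
        rw [div_eq_div_iff (by positivity) (by positivity)]
        ring
      · have hk := key μ t n
        have h4 : C / (Nat.factorial n) * ∫ u in Ico (0:ℝ) t, (F μ u)^n ∂μ
            ≤ C / (Nat.factorial n) * ((F μ t)^(n+1) / ((n:ℝ)+1)) :=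
          mul_le_mul_of_nonneg_left hk (by positivity)
        refine h4.trans (le_of_eq ?_)
        rw [Nat.factorial_succ]
        have hfk : (Nat.factorial n : ℝ) ≠ 0 := by positivity
        have hk1 : ((n:ℝ)+1) ≠ 0 := by positivity
        push_cast
        rw [div_mul_div_comm]
        rw [div_eq_div_iff (by positivity) (by positivity)]
        ring
    refine h1.trans ?_
    refine (add_le_add_right h3 ε).trans (le_of_eq ?_)
    rw [Finset.sum_range_succ' (fun k => (F μ t)^k / (Nat.factorial k)) n]
    simp only [pow_zero, Nat.factorial_zero, Nat.cast_one, div_one]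
    rw [mul_add, mul_one, Finset.mul_sum]
    ring

end GronwallAux

/-- Generalized Gronwall inequality with a general Borel measure. -/
theorem generalized_gronwall (μ : Measure ℝ) [IsFiniteMeasureOnCompacts μ]
    (ε : ℝ) (hε : 0 ≤ ε) (g : ℝ → ℝ) (hmeas : Measurable g)
    (hbdd : ∀ T : ℝ, ∃ C : ℝ, ∀ t ∈ Icc (0:ℝ) T, |g t| ≤ C)
    (hpos : ∀ t, 0 ≤ t → 0 ≤ g t)
    (hineq : ∀ t, 0 ≤ t → g t ≤ ε + ∫ s in Ico (0:ℝ) t, g s ∂μ) :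
    ∀ t, 0 ≤ t → g t ≤ ε * Real.exp (μ (Ico (0:ℝ) t)).toReal := by
  intro t ht
  obtain ⟨C₀, hC₀⟩ := hbdd t
  set C := max C₀ 0 with hCdef
  have hC : 0 ≤ C := le_max_right _ _
  have hCbd : ∀ u ∈ Icc (0:ℝ) t, |g u| ≤ C := fun u hu => (hC₀ u hu).trans (le_max_left _ _)
  have hiter := GronwallAux.iterate μ t ε C hε hC g hmeas hCbd hineq
  set m := GronwallAux.F μ t with hm
  have hm0 : 0 ≤ m := GronwallAux.F_nonneg μ t
  have hstep : ∀ n : ℕ, g t ≤ ε * Real.exp m + C * m^n / (Nat.factorial n) := by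
    intro n
    refine (hiter n t ⟨ht, le_rfl⟩).trans ?_
    exact add_le_add_left
      (mul_le_mul_of_nonneg_left (Real.sum_le_exp_of_nonneg hm0 n) hε) _
  have htend : Filter.Tendsto (fun n : ℕ => ε * Real.exp m + C * m^n / (Nat.factorial n))
      Filter.atTop (nhds (ε * Real.exp m)) := by
    have h2 : Filter.Tendsto (fun n : ℕ => C * (m^n / (Nat.factorial n)))
        Filter.atTop (nhds (C * 0)) :=
      (FloorSemiring.tendsto_pow_div_factorial_atTop m).const_mul C
    simp_rw [mul_div_assoc]
    have h3 := Filter.Tendsto.add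
      (tendsto_const_nhds : Filter.Tendsto (fun _ : ℕ => ε * Real.exp m)
        Filter.atTop (nhds (ε * Real.exp m))) h2
    simpa using h3
  exact ge_of_tendsto htend (Filter.Eventually.of_forall hstep)
end

section
/- Let δ > 0, b ≥ 0, σ > 0, c > 0, and let g, f_g be as follows: g : ℝ → [0,∞) is C¹ with g = 0 on (-∞,0], g(x) = x^{δ/2+2} on [0,c/2], g' ≥ 0 on (-∞,c] and g' ≤ 0 on [c,∞); f_g(x) = -∫₀^{-x} y^{δ/2} e^{by/2} dy for x < 0 and f_g(x) = ∫₀^x g(y) y^{-δ/2} e^{by/2} dy for x ≥ 0. Then the second derivative of f_g exists on ℝ \ {0} and is locally integrable on ℝ, and L f_g(x) := (σ²/2)|x| f_g''(x) + (σ²/4)(δ - bx) f_g'(x) satisfies L f_g(x) = (σ²/2)·x^{1-δ/2}·e^{bx/2}·g'(x)·1_{x>0} for all x ≠ 0, i.e. L f_g(x) = 0 for x < 0. -/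
open MeasureTheory Set

noncomputable def phiFG (δ b : ℝ) (g : ℝ → ℝ) (x : ℝ) : ℝ :=
  if x < 0 then (-x) ^ (δ/2) * Real.exp (b * -x / 2)
  else g x * x ^ (-(δ/2)) * Real.exp (b * x / 2)

noncomputable def psiFG (δ b : ℝ) (g : ℝ → ℝ) (x : ℝ) : ℝ :=
  if x < 0 then
    -(δ/2 * (-x) ^ (δ/2 - 1) * Real.exp (b * -x / 2)
      + (-x) ^ (δ/2) * (Real.exp (b * -x / 2) * (b/2)))
  else
    (deriv g x * x ^ (-(δ/2)) + g x * (-(δ/2) * x ^ (-(δ/2) - 1))) * Real.exp (b * x / 2)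
      + g x * x ^ (-(δ/2)) * (Real.exp (b * x / 2) * (b/2))

lemma expDerivFG (b x : ℝ) :
    HasDerivAt (fun t => Real.exp (b * t / 2)) (Real.exp (b * x / 2) * (b/2)) x := by
  have h : HasDerivAt (fun t : ℝ => b * t / 2) (b / 2) x := by
    simpa using ((hasDerivAt_id x).const_mul b).div_const 2
  simpa using h.exp

lemma f1contFG (δ b : ℝ) (hδ : 0 < δ) :
    Continuous (fun y : ℝ => y ^ (δ/2) * Real.exp (b*y/2)) :=
  (Real.continuous_rpow_const (by positivity)).mul
    (Real.continuous_exp.comp ((continuous_const.mul continuous_id).div_const 2))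

/-- derivative of fg on the negative side -/
lemma fgDerivNeg (δ b : ℝ) (hδ : 0 < δ) (fg : ℝ → ℝ)
    (hfg_neg : ∀ x < (0:ℝ), fg x = -(∫ y in (0:ℝ)..(-x), y ^ (δ/2) * Real.exp (b*y/2)))
    {x : ℝ} (hx : x < 0) :
    HasDerivAt fg ((-x) ^ (δ/2) * Real.exp (b * -x / 2)) x := by
  have hcont := f1contFG δ b hδ
  have hF : HasDerivAt (fun t => ∫ y in (0:ℝ)..t, y ^ (δ/2) * Real.exp (b*y/2))
      ((-x) ^ (δ/2) * Real.exp (b * -x / 2)) (-x) := by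
    have := intervalIntegral.integral_hasDerivAt_right
      (hcont.intervalIntegrable 0 (-x))
      (hcont.stronglyMeasurableAtFilter volume (nhds (-x))) hcont.continuousAt
    simpa [mul_comm, mul_div_assoc] using this
  have h2 : HasDerivAt (fun t => -(∫ y in (0:ℝ)..(-t), y ^ (δ/2) * Real.exp (b*y/2)))
      ((-x) ^ (δ/2) * Real.exp (b * -x / 2)) x := by
    have := (hF.comp x (hasDerivAt_neg x)).neg
    simpa [Function.comp_def, Pi.neg_def] using this
  exact h2.congr_of_eventuallyEq
    (Filter.eventuallyEq_of_mem (Iio_mem_nhds hx) fun y hy => hfg_neg y hy)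

lemma f2contFG (δ b c : ℝ) (hδ : 0 < δ) (hc : 0 < c) (g : ℝ → ℝ) (hg : ContDiff ℝ 1 g)
    (hg0 : ∀ x ≤ (0:ℝ), g x = 0)
    (hgc : ∀ x ∈ Set.Icc (0:ℝ) (c/2), g x = x ^ (δ/2 + 2)) :
    ContinuousOn (fun y : ℝ => g y * y ^ (-(δ/2)) * Real.exp (b*y/2)) (Ici 0) := by
  have hexp : Continuous fun y : ℝ => Real.exp (b*y/2) :=
    Real.continuous_exp.comp ((continuous_const.mul continuous_id).div_const 2)
  intro y hy
  rcases eq_or_lt_of_le (mem_Ici.mp hy) with rfl | hy'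
  · have hmem : Ici (0:ℝ) ∩ Iio (c/2) ∈ nhdsWithin (0:ℝ) (Ici 0) :=
      inter_mem_nhdsWithin _ (Iio_mem_nhds (by positivity))
    have hev : (fun y : ℝ => g y * y ^ (-(δ/2)) * Real.exp (b*y/2))
        =ᶠ[nhdsWithin (0:ℝ) (Ici 0)] (fun y : ℝ => y^2 * Real.exp (b*y/2)) := by
      refine Filter.eventuallyEq_of_mem hmem fun t ht => ?_
      rcases eq_or_lt_of_le (mem_Ici.mp ht.1) with rfl | ht'
      · simp [hg0 0 le_rfl]
      · have hgt : g t = t ^ (δ/2 + 2) := hgc t ⟨ht.1, ht.2.le⟩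
        rw [hgt]
        have : t ^ (δ/2 + 2) * t ^ (-(δ/2)) = t ^ 2 := by
          rw [← Real.rpow_add ht', show δ/2 + 2 + -(δ/2) = ((2:ℕ):ℝ) by push_cast; ring,
            Real.rpow_natCast]
        rw [this]
    have hc2 : ContinuousWithinAt (fun y : ℝ => y^2 * Real.exp (b*y/2)) (Ici 0) 0 :=
      ((continuous_pow 2).mul hexp).continuousWithinAt
    refine hc2.congr_of_eventuallyEq hev ?_
    simp [hg0 0 le_rfl]
  · refine ContinuousAt.continuousWithinAt ?_
    exact ((hg.continuous.continuousAt.mul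
      (Real.continuousAt_rpow_const y _ (Or.inl hy'.ne'))).mul hexp.continuousAt)

lemma fgDerivPos (δ b c : ℝ) (hδ : 0 < δ) (hc : 0 < c) (g : ℝ → ℝ) (hg : ContDiff ℝ 1 g)
    (hg0 : ∀ x ≤ (0:ℝ), g x = 0)
    (hgc : ∀ x ∈ Set.Icc (0:ℝ) (c/2), g x = x ^ (δ/2 + 2))
    (fg : ℝ → ℝ)
    (hfg_pos : ∀ x ≥ (0:ℝ), fg x = ∫ y in (0:ℝ)..x, g y * y ^ (-(δ/2)) * Real.exp (b*y/2))
    {x : ℝ} (hx : 0 < x) :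
    HasDerivAt fg (g x * x ^ (-(δ/2)) * Real.exp (b * x / 2)) x := by
  have hcont := f2contFG δ b c hδ hc g hg hg0 hgc
  have hexp : Continuous fun y : ℝ => Real.exp (b*y/2) :=
    Real.continuous_exp.comp ((continuous_const.mul continuous_id).div_const 2)
  have hII : IntervalIntegrable (fun y : ℝ => g y * y ^ (-(δ/2)) * Real.exp (b*y/2)) volume 0 x := by
    refine (hcont.mono ?_).intervalIntegrable
    rw [uIcc_of_le hx.le]; exact Icc_subset_Ici_self
  have hca : ContinuousAt (fun y : ℝ => g y * y ^ (-(δ/2)) * Real.exp (b*y/2)) x :=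
    ((hg.continuous.continuousAt.mul
      (Real.continuousAt_rpow_const x _ (Or.inl hx.ne'))).mul hexp.continuousAt)
  have hF := intervalIntegral.integral_hasDerivAt_right hII
    (ContinuousAt.stronglyMeasurableAtFilter isOpen_Ioi (fun y (hy : y ∈ Ioi 0) =>
      ((hg.continuous.continuousAt.mul
        (Real.continuousAt_rpow_const y _ (Or.inl (ne_of_gt hy)))).mul hexp.continuousAt)) x hx) hca
  exact hF.congr_of_eventuallyEq
    (Filter.eventuallyEq_of_mem (Ioi_mem_nhds hx) fun y (hy : y ∈ Ioi 0) => hfg_pos y (le_of_lt hy))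

lemma phiDerivFG (δ b : ℝ) (g : ℝ → ℝ) (hg : ContDiff ℝ 1 g)
    {x : ℝ} (hx : x ≠ 0) :
    HasDerivAt (phiFG δ b g) (psiFG δ b g x) x := by
  rcases hx.lt_or_gt with hx' | hx'
  · have h1 : HasDerivAt (fun t : ℝ => t ^ (δ/2)) (δ/2 * (-x) ^ (δ/2 - 1)) (-x) :=
      Real.hasDerivAt_rpow_const (Or.inl (by linarith : -x ≠ 0))
    have hq : HasDerivAt (fun t : ℝ => t ^ (δ/2) * Real.exp (b * t / 2))
        (δ/2 * (-x) ^ (δ/2 - 1) * Real.exp (b * -x / 2)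
          + (-x) ^ (δ/2) * (Real.exp (b * -x / 2) * (b/2))) (-x) := h1.mul (expDerivFG b (-x))
    have h2 : HasDerivAt (fun y : ℝ => (-y) ^ (δ/2) * Real.exp (b * -y / 2))
        (psiFG δ b g x) x := by
      have := hq.comp x (hasDerivAt_neg x)
      rw [show psiFG δ b g x = (δ/2 * (-x) ^ (δ/2 - 1) * Real.exp (b * -x / 2)
          + (-x) ^ (δ/2) * (Real.exp (b * -x / 2) * (b/2))) * (-1) by
        simp only [psiFG, if_pos hx']; ring]
      exact this
    exact h2.congr_of_eventuallyEq
      (Filter.eventuallyEq_of_mem (Iio_mem_nhds hx') fun y (hy : y ∈ Iio 0) => by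
        simp [phiFG, if_pos (show y < 0 from hy)])
  · have hgd : HasDerivAt g (deriv g x) x := ((hg.differentiable one_ne_zero) x).hasDerivAt
    have hr : HasDerivAt (fun t : ℝ => t ^ (-(δ/2))) (-(δ/2) * x ^ (-(δ/2) - 1)) x :=
      Real.hasDerivAt_rpow_const (Or.inl hx'.ne')
    have h2 : HasDerivAt (fun y : ℝ => g y * y ^ (-(δ/2)) * Real.exp (b * y / 2))
        (psiFG δ b g x) x := by
      have := (hgd.mul hr).mul (expDerivFG b x)
      rw [show psiFG δ b g x = (deriv g x * x ^ (-(δ/2)) + g x * (-(δ/2) * x ^ (-(δ/2) - 1)))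
          * Real.exp (b * x / 2) + g x * x ^ (-(δ/2)) * (Real.exp (b * x / 2) * (b/2)) by
        simp [psiFG, if_neg (not_lt.mpr hx'.le)]]
      exact this
    exact h2.congr_of_eventuallyEq
      (Filter.eventuallyEq_of_mem (Ioi_mem_nhds hx') fun y (hy : y ∈ Ioi 0) => by
        simp [phiFG, if_neg (not_lt.mpr (le_of_lt (mem_Ioi.mp hy)))])

lemma psiContAtFG (δ b : ℝ) (g : ℝ → ℝ) (hg : ContDiff ℝ 1 g) {x : ℝ} (hx : x ≠ 0) :
    ContinuousAt (psiFG δ b g) x := by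
  have hexpneg : Continuous fun y : ℝ => Real.exp (b * -y / 2) :=
    Real.continuous_exp.comp ((continuous_const.mul continuous_neg).div_const 2)
  have hexp : Continuous fun y : ℝ => Real.exp (b * y / 2) :=
    Real.continuous_exp.comp ((continuous_const.mul continuous_id).div_const 2)
  rcases hx.lt_or_gt with hx' | hx'
  · have hbranch : ContinuousAt (fun y : ℝ =>
        -(δ/2 * (-y) ^ (δ/2 - 1) * Real.exp (b * -y / 2)
          + (-y) ^ (δ/2) * (Real.exp (b * -y / 2) * (b/2)))) x := by
      have h1 : ContinuousAt (fun y : ℝ => (-y) ^ (δ/2 - 1)) x :=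
        (Real.continuousAt_rpow_const (-x) _ (Or.inl (by linarith))).comp
          continuous_neg.continuousAt
      have h2 : ContinuousAt (fun y : ℝ => (-y) ^ (δ/2)) x :=
        (Real.continuousAt_rpow_const (-x) _ (Or.inl (by linarith))).comp
          continuous_neg.continuousAt
      exact (((continuousAt_const.mul h1).mul hexpneg.continuousAt).add
        (h2.mul (hexpneg.continuousAt.mul continuousAt_const))).neg
    refine hbranch.congr ?_
    exact Filter.eventuallyEq_of_mem (Iio_mem_nhds hx') fun y (hy : y ∈ Iio 0) => by
      simp only [psiFG, if_pos (show y < 0 from hy)]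
  · have h1 : ContinuousAt (fun y : ℝ => y ^ (-(δ/2))) x :=
      Real.continuousAt_rpow_const x _ (Or.inl hx'.ne')
    have h2 : ContinuousAt (fun y : ℝ => y ^ (-(δ/2) - 1)) x :=
      Real.continuousAt_rpow_const x _ (Or.inl hx'.ne')
    have hbranch : ContinuousAt (fun y : ℝ =>
        (deriv g y * y ^ (-(δ/2)) + g y * (-(δ/2) * y ^ (-(δ/2) - 1))) * Real.exp (b * y / 2)
          + g y * y ^ (-(δ/2)) * (Real.exp (b * y / 2) * (b/2))) x := by
      have hdg : ContinuousAt (deriv g) x := (hg.continuous_deriv le_rfl).continuousAt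
      exact ((((hdg.mul h1).add (hg.continuous.continuousAt.mul
          (continuousAt_const.mul h2))).mul hexp.continuousAt).add
        ((hg.continuous.continuousAt.mul h1).mul (hexp.continuousAt.mul continuousAt_const)))
    refine hbranch.congr ?_
    exact Filter.eventuallyEq_of_mem (Ioi_mem_nhds hx') fun y (hy : y ∈ Ioi 0) => by
      simp only [psiFG, if_neg (not_lt.mpr (le_of_lt (mem_Ioi.mp hy)))]

lemma psiIntNegFG (δ b : ℝ) (hδ : 0 < δ) (g : ℝ → ℝ) :
    IntegrableOn (psiFG δ b g) (Ico (-1 : ℝ) 0) volume := by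
  set K : ℝ → ℝ := fun t =>
    -(δ/2 * t ^ (δ/2 - 1) * Real.exp (b * t / 2)
      + t ^ (δ/2) * (Real.exp (b * t / 2) * (b/2))) with hK
  have hexp : Continuous fun t : ℝ => Real.exp (b * t / 2) :=
    Real.continuous_exp.comp ((continuous_const.mul continuous_id).div_const 2)
  have hK1 : IntervalIntegrable K volume 0 1 := by
    have hr : IntervalIntegrable (fun t : ℝ => t ^ (δ/2 - 1)) volume 0 1 :=
      intervalIntegral.intervalIntegrable_rpow' (by linarith)
    have hA : IntervalIntegrable (fun t : ℝ => δ/2 * t ^ (δ/2 - 1) * Real.exp (b * t / 2))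
        volume 0 1 := by
      have := (hr.mul_continuousOn (hexp.continuousOn)).const_mul (δ/2)
      simpa [mul_assoc] using this
    have hB : IntervalIntegrable (fun t : ℝ => t ^ (δ/2) * (Real.exp (b * t / 2) * (b/2)))
        volume 0 1 :=
      (((Real.continuous_rpow_const (by positivity)).mul
        (hexp.mul continuous_const)).intervalIntegrable 0 1)
    exact (hA.add hB).neg
  have hKneg : IntervalIntegrable (fun y : ℝ => K (-y)) volume (-1) 0 := by
    have := (IntervalIntegrable.iff_comp_neg (by simp)).mp hK1
    simpa using this.symm
  have hIoc : IntegrableOn (fun y : ℝ => K (-y)) (Ioc (-1 : ℝ) 0) volume := by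
    have := hKneg
    rw [intervalIntegrable_iff, uIoc_of_le (by norm_num : (-1:ℝ) ≤ 0)] at this
    exact this
  have hIco : IntegrableOn (fun y : ℝ => K (-y)) (Ico (-1 : ℝ) 0) volume := by
    rw [integrableOn_Ico_iff_integrableOn_Ioo]
    exact hIoc.mono_set Ioo_subset_Ioc_self
  refine hIco.congr_fun ?_ measurableSet_Ico
  intro y hy
  simp only [K, psiFG, if_pos hy.2]

lemma gderivFG (δ c : ℝ) (g : ℝ → ℝ)
    (hgc : ∀ x ∈ Set.Icc (0:ℝ) (c/2), g x = x ^ (δ/2 + 2))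
    {y : ℝ} (hy : y ∈ Ioo (0:ℝ) (c/2)) :
    deriv g y = (δ/2 + 2) * y ^ (δ/2 + 1) := by
  have hev : g =ᶠ[nhds y] (fun t : ℝ => t ^ (δ/2 + 2)) :=
    Filter.eventuallyEq_of_mem (Ioo_mem_nhds hy.1 hy.2) fun t ht =>
      hgc t ⟨ht.1.le, ht.2.le⟩
  rw [hev.deriv_eq, Real.deriv_rpow_const,
    show δ/2 + 2 - 1 = δ/2 + 1 by ring]

lemma psiIntPosFG (δ b c : ℝ) (hδ : 0 < δ) (hc : 0 < c) (g : ℝ → ℝ)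
    (hg0 : ∀ x ≤ (0:ℝ), g x = 0)
    (hgc : ∀ x ∈ Set.Icc (0:ℝ) (c/2), g x = x ^ (δ/2 + 2)) :
    IntegrableOn (psiFG δ b g) (Icc (0:ℝ) (c/4)) volume := by
  set G : ℝ → ℝ := fun y => 2 * y * Real.exp (b * y / 2) + y^2 * (Real.exp (b * y / 2) * (b/2))
    with hG
  have hexp : Continuous fun t : ℝ => Real.exp (b * t / 2) :=
    Real.continuous_exp.comp ((continuous_const.mul continuous_id).div_const 2)
  have hGint : IntegrableOn G (Icc (0:ℝ) (c/4)) volume := by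
    apply Continuous.integrableOn_Icc
    exact ((continuous_const.mul continuous_id).mul hexp).add
      ((continuous_pow 2).mul (hexp.mul continuous_const))
  refine hGint.congr_fun ?_ measurableSet_Icc
  intro y hy
  symm
  have hyc : y < c/2 := lt_of_le_of_lt hy.2 (by linarith)
  rcases eq_or_lt_of_le hy.1 with rfl | hy'
  · simp [G, psiFG, hg0 0 le_rfl,
      Real.zero_rpow (neg_ne_zero.mpr (by positivity : (δ/2) ≠ 0))]
  · have hgy : g y = y ^ (δ/2 + 2) := hgc y ⟨hy'.le, by linarith⟩
    have hdy : deriv g y = (δ/2 + 2) * y ^ (δ/2 + 1) := gderivFG δ c g hgc ⟨hy', hyc⟩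
    have e1 : y ^ (δ/2 + 1) * y ^ (-(δ/2)) = y := by
      rw [← Real.rpow_add hy', show δ/2 + 1 + -(δ/2) = 1 by ring, Real.rpow_one]
    have e2 : y ^ (δ/2 + 2) * y ^ (-(δ/2) - 1) = y := by
      rw [← Real.rpow_add hy', show δ/2 + 2 + (-(δ/2) - 1) = 1 by ring, Real.rpow_one]
    have e3 : y ^ (δ/2 + 2) * y ^ (-(δ/2)) = y ^ 2 := by
      rw [← Real.rpow_add hy', show δ/2 + 2 + -(δ/2) = ((2:ℕ):ℝ) by push_cast; ring,
        Real.rpow_natCast]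
    simp only [G, psiFG, if_neg (not_lt.mpr hy.1)]
    rw [hgy, hdy]
    calc ((δ/2 + 2) * y ^ (δ/2 + 1) * y ^ (-(δ/2))
          + y ^ (δ/2 + 2) * (-(δ/2) * y ^ (-(δ/2) - 1))) * Real.exp (b * y / 2)
          + y ^ (δ/2 + 2) * y ^ (-(δ/2)) * (Real.exp (b * y / 2) * (b/2))
        = ((δ/2 + 2) * (y ^ (δ/2 + 1) * y ^ (-(δ/2)))
            - δ/2 * (y ^ (δ/2 + 2) * y ^ (-(δ/2) - 1))) * Real.exp (b * y / 2)
          + (y ^ (δ/2 + 2) * y ^ (-(δ/2))) * (Real.exp (b * y / 2) * (b/2)) := by ring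
      _ = 2 * y * Real.exp (b * y / 2) + y^2 * (Real.exp (b * y / 2) * (b/2)) := by
          rw [e1, e2, e3]; ring

lemma psiLocIntFG (δ b c : ℝ) (hδ : 0 < δ) (hc : 0 < c) (g : ℝ → ℝ) (hg : ContDiff ℝ 1 g)
    (hg0 : ∀ x ≤ (0:ℝ), g x = 0)
    (hgc : ∀ x ∈ Set.Icc (0:ℝ) (c/2), g x = x ^ (δ/2 + 2)) :
    LocallyIntegrable (psiFG δ b g) volume := by
  intro x
  rcases lt_trichotomy x 0 with hx | rfl | hx
  · refine ⟨Icc (x - 1) (x/2), Icc_mem_nhds (by linarith) (by linarith), ?_⟩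
    refine ContinuousOn.integrableOn_compact isCompact_Icc fun y hy => ?_
    exact (psiContAtFG δ b g hg (by nlinarith [hy.2] : y ≠ 0)).continuousWithinAt
  · refine ⟨Icc (-1 : ℝ) (c/4), Icc_mem_nhds (by norm_num) (by positivity), ?_⟩
    rw [show Icc (-1:ℝ) (c/4) = Ico (-1:ℝ) 0 ∪ Icc 0 (c/4) from
      (Ico_union_Icc_eq_Icc (by norm_num) (by positivity)).symm]
    exact (psiIntNegFG δ b hδ g).union (psiIntPosFG δ b c hδ hc g hg0 hgc)
  · refine ⟨Icc (x/2) (x + 1), Icc_mem_nhds (by linarith) (by linarith), ?_⟩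
    refine ContinuousOn.integrableOn_compact isCompact_Icc fun y hy => ?_
    exact (psiContAtFG δ b g hg (by nlinarith [hy.1] : y ≠ 0)).continuousWithinAt

theorem fg_second_derivative_and_generator (δ b σ c : ℝ)
    (hδ : 0 < δ) (hb : 0 ≤ b) (hσ : 0 < σ) (hc : 0 < c)
    (g : ℝ → ℝ) (hg : ContDiff ℝ 1 g) (hgnn : ∀ x, 0 ≤ g x)
    (hg0 : ∀ x ≤ (0:ℝ), g x = 0)
    (hgc : ∀ x ∈ Set.Icc (0:ℝ) (c/2), g x = x ^ (δ/2 + 2))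
    (hg_inc : ∀ x ≤ c, 0 ≤ deriv g x) (hg_dec : ∀ x ≥ c, deriv g x ≤ 0)
    (fg : ℝ → ℝ)
    (hfg_neg : ∀ x < (0:ℝ), fg x = -(∫ y in (0:ℝ)..(-x), y ^ (δ/2) * Real.exp (b*y/2)))
    (hfg_pos : ∀ x ≥ (0:ℝ), fg x = ∫ y in (0:ℝ)..x, g y * y ^ (-(δ/2)) * Real.exp (b*y/2)) :
    (∀ x : ℝ, x ≠ 0 → DifferentiableAt ℝ (deriv fg) x) ∧
    LocallyIntegrable (deriv (deriv fg)) volume ∧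
    (∀ x : ℝ, x ≠ 0 →
      σ^2/2 * |x| * deriv (deriv fg) x + σ^2/4 * (δ - b*x) * deriv fg x =
        if 0 < x then σ^2/2 * x ^ (1 - δ/2) * Real.exp (b*x/2) * deriv g x else 0) := by
  -- first derivative of fg equals phiFG away from 0
  have hD1 : ∀ x : ℝ, x ≠ 0 → HasDerivAt fg (phiFG δ b g x) x := by
    intro x hx
    rcases hx.lt_or_gt with hx' | hx'
    · have := fgDerivNeg δ b hδ fg hfg_neg hx'
      simpa [phiFG, if_pos hx'] using this
    · have := fgDerivPos δ b c hδ hc g hg hg0 hgc fg hfg_pos hx'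
      simpa [phiFG, if_neg (not_lt.mpr hx'.le), mul_div_assoc] using this
  have hderiv1 : ∀ x : ℝ, x ≠ 0 → deriv fg x = phiFG δ b g x := fun x hx => (hD1 x hx).deriv
  have hev_deriv : ∀ x : ℝ, x ≠ 0 → deriv fg =ᶠ[nhds x] phiFG δ b g := by
    intro x hx
    exact Filter.eventuallyEq_of_mem (isOpen_compl_singleton.mem_nhds hx)
      fun y hy => hderiv1 y hy
  have hD2 : ∀ x : ℝ, x ≠ 0 → HasDerivAt (deriv fg) (psiFG δ b g x) x := fun x hx =>
    (phiDerivFG δ b g hg hx).congr_of_eventuallyEq (hev_deriv x hx)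
  have hderiv2 : ∀ x : ℝ, x ≠ 0 → deriv (deriv fg) x = psiFG δ b g x := fun x hx =>
    (hD2 x hx).deriv
  refine ⟨fun x hx => (hD2 x hx).differentiableAt, ?_, ?_⟩
  · -- local integrability
    have hae : deriv (deriv fg) =ᵐ[volume] psiFG δ b g := by
      have h0 : ∀ᵐ x : ℝ, x ≠ (0:ℝ) := by
        have hset : {x : ℝ | ¬ x ≠ 0} = {(0:ℝ)} := by ext x; simp
        rw [ae_iff, hset]
        exact Real.volume_singleton
      exact h0.mono fun x hx => hderiv2 x hx
    intro x₀
    obtain ⟨s, hsl, hs⟩ := psiLocIntFG δ b c hδ hc g hg hg0 hgc x₀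
    exact ⟨s, hsl, hs.congr (ae_restrict_of_ae hae.symm)⟩
  · intro x hx
    rw [hderiv1 x hx, hderiv2 x hx]
    rcases hx.lt_or_gt with hx' | hx'
    · rw [if_neg (by linarith : ¬ 0 < x)]
      simp only [phiFG, psiFG, if_pos hx', abs_of_neg hx']
      have hA : (-x) ^ (δ/2) = (-x) ^ (δ/2 - 1) * (-x) := by
        rw [← Real.rpow_add_one (by linarith : -x ≠ 0), sub_add_cancel]
      rw [hA]; ring
    · rw [if_pos hx', abs_of_pos hx']
      simp only [phiFG, psiFG, if_neg (not_lt.mpr hx'.le)]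
      have hB : x ^ (-(δ/2)) = x ^ (-(δ/2) - 1) * x := by
        rw [← Real.rpow_add_one hx'.ne', sub_add_cancel]
      have hC : x ^ (1 - δ/2) = x ^ (-(δ/2) - 1) * x^2 := by
        rw [← Real.rpow_natCast x 2, ← Real.rpow_add hx',
          show -(δ/2) - 1 + ((2:ℕ):ℝ) = 1 - δ/2 by push_cast; ring]
      rw [hB, hC, show b * x / 2 = b * x / 2 from rfl]
      ring
end
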